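/- arXiv:1512.03767 — 2 statements merged into one kernel-verified Lean document; each statement's English description precedes it below -/
import Mathlib

section
/- For all φ₀, φ₁ with 0 < φ₀ < φ₁ < π/2, the map T̃_{C_ℓ}(ã) := √2 ∫₀^{π/2} dθ/√(1 − ã sin²θ) + (1/√2) ∫_{φ₀}^{φ₁} dx/√(ã − sin²x) satisfies: T̃_{C_ℓ}(ã) → +∞ as ã → 1⁻; T̃_{C_ℓ}(ã) → T^* := 3T(φ₁) − T₁(φ₁, φ₀) as ã → (sin²φ₁)⁺; and there exists ε > 0 such that T̃_{C_ℓ}(ã) < T^* for all ã ∈ (sin²φ₁, sin²φ₁ + ε). -/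
open Real Filter MeasureTheory intervalIntegral Set


/-- The time map `T(α) = ∫₀^α dx / √(cos 2x − cos 2α)`. -/
noncomputable def timeMapT (α : ℝ) : ℝ :=
  ∫ x in (0:ℝ)..α, 1 / Real.sqrt (Real.cos (2 * x) - Real.cos (2 * α))

/-- The time map `T₁(α, φ) = ∫₀^φ dx / √(cos 2x − cos 2α)`. -/
noncomputable def timeMapT1 (α φ : ℝ) : ℝ :=
  ∫ x in (0:ℝ)..φ, 1 / Real.sqrt (Real.cos (2 * x) - Real.cos (2 * α))

/-- The map `T̃_{C_ℓ}(ã) = √2 ∫₀^{π/2} dθ/√(1 − ã sin²θ)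
 + (1/√2) ∫_{φ₀}^{φ₁} dx/√(ã − sin²x)`. -/
noncomputable def timeMapTClTilde (φ₀ φ₁ a : ℝ) : ℝ :=
  Real.sqrt 2 * (∫ θ in (0:ℝ)..(π / 2), 1 / Real.sqrt (1 - a * Real.sin θ ^ 2)) +
    (1 / Real.sqrt 2) * ∫ x in φ₀..φ₁, 1 / Real.sqrt (a - Real.sin x ^ 2)

namespace TMaux

noncomputable def G (φ₁ x : ℝ) : ℝ := 1 / Real.sqrt (Real.sin φ₁ ^ 2 - Real.sin x ^ 2)
noncomputable def H (φ₁ θ : ℝ) : ℝ := 1 / Real.sqrt (1 - Real.sin φ₁ ^ 2 * Real.sin θ ^ 2)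
noncomputable def mC (φ₁ : ℝ) : ℝ := 2 / π * Real.cos φ₁ * Real.sin φ₁

variable {φ₁ : ℝ}

lemma sin_pos' (h1 : 0 < φ₁) (h2 : φ₁ < π / 2) : 0 < Real.sin φ₁ :=
  Real.sin_pos_of_pos_of_lt_pi h1 (h2.trans (by linarith [Real.pi_pos]))

lemma sin_lt_one' (h1 : 0 < φ₁) (h2 : φ₁ < π / 2) : Real.sin φ₁ < 1 := by
  have := Real.strictMonoOn_sin (a := φ₁) (b := π/2)
    ⟨by nlinarith [Real.pi_pos], h2.le⟩
    ⟨by nlinarith [Real.pi_pos], le_refl _⟩ h2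
  simpa [Real.sin_pi_div_two] using this

lemma cos_pos' (h1 : 0 < φ₁) (h2 : φ₁ < π / 2) : 0 < Real.cos φ₁ :=
  Real.cos_pos_of_mem_Ioo ⟨by linarith [Real.pi_pos], h2⟩

lemma mC_pos (h1 : 0 < φ₁) (h2 : φ₁ < π / 2) : 0 < mC φ₁ := by
  have := sin_pos' h1 h2; have := cos_pos' h1 h2; have := Real.pi_pos
  unfold mC; positivity

lemma pointEq (α x : ℝ) :
    1 / Real.sqrt (Real.cos (2*x) - Real.cos (2*α)) =
      (1 / Real.sqrt 2) * (1 / Real.sqrt (Real.sin α ^ 2 - Real.sin x ^ 2)) := by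
  have h : Real.cos (2*x) - Real.cos (2*α) = 2 * (Real.sin α ^ 2 - Real.sin x ^ 2) := by
    have hx := Real.cos_two_mul x
    have ha := Real.cos_two_mul α
    have sx := Real.sin_sq_add_cos_sq x
    have sa := Real.sin_sq_add_cos_sq α
    nlinarith
  rw [h, Real.sqrt_mul (by norm_num : (0:ℝ) ≤ 2), div_mul_div_comm, one_mul]

lemma sq_lt (h2 : φ₁ ≤ π / 2) {x : ℝ} (hx0 : 0 ≤ x) (hx : x < φ₁) :
    Real.sin x ^ 2 < Real.sin φ₁ ^ 2 := by
  have hs : Real.sin x < Real.sin φ₁ :=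
    Real.strictMonoOn_sin ⟨by nlinarith [Real.pi_pos], by linarith⟩
      ⟨by nlinarith [Real.pi_pos], h2⟩ hx
  have hx' : 0 ≤ Real.sin x := Real.sin_nonneg_of_nonneg_of_le_pi hx0
    (by nlinarith [Real.pi_pos])
  nlinarith

lemma lbG (h1 : 0 < φ₁) (h2 : φ₁ < π / 2) {x : ℝ} (hx0 : 0 ≤ x) (hx : x ≤ φ₁) :
    mC φ₁ * (φ₁ - x) ≤ Real.sin φ₁ ^ 2 - Real.sin x ^ 2 := by
  have hπ := Real.pi_pos
  have hd : Real.sin φ₁ - Real.sin x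
      = 2 * Real.sin ((φ₁ - x)/2) * Real.cos ((φ₁ + x)/2) := Real.sin_sub_sin φ₁ x
  have ht : 2 / π * ((φ₁ - x)/2) ≤ Real.sin ((φ₁ - x)/2) :=
    Real.mul_le_sin (by linarith) (by linarith)
  have hc : Real.cos φ₁ ≤ Real.cos ((φ₁ + x)/2) := by
    have := Real.strictAntiOn_cos (a := (φ₁ + x)/2) (b := φ₁)
    rcases eq_or_lt_of_le hx with h | h
    · rw [h]; simp
    · exact le_of_lt (this ⟨by linarith, by linarith⟩ ⟨by linarith, by linarith⟩ (by linarith))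
  have hsx : 0 ≤ Real.sin x := Real.sin_nonneg_of_nonneg_of_le_pi hx0 (by linarith)
  have hsφ : 0 < Real.sin φ₁ := sin_pos' h1 h2
  have hcφ : 0 < Real.cos φ₁ := cos_pos' h1 h2
  have hsum : Real.sin φ₁ ≤ Real.sin φ₁ + Real.sin x := by linarith
  have key : 2 / π * Real.cos φ₁ * (φ₁ - x) ≤ Real.sin φ₁ - Real.sin x := by
    rw [hd]
    have h0t : (0:ℝ) ≤ 2 / π * ((φ₁ - x)/2) := mul_nonneg (by positivity) (by linarith)
    nlinarith [mul_le_mul ht hc hcφ.le (le_trans h0t ht)]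
  unfold mC
  nlinarith [mul_le_mul_of_nonneg_left hsum (mul_nonneg (mul_nonneg
    (by positivity : (0:ℝ) ≤ 2/π) hcφ.le) (by linarith : (0:ℝ) ≤ φ₁ - x))]

lemma ubG (h1 : 0 < φ₁) (h2 : φ₁ < π / 2) {x : ℝ} (hx0 : 0 ≤ x) (hx : x ≤ φ₁) :
    Real.sin φ₁ ^ 2 - Real.sin x ^ 2 ≤ 2 * (φ₁ - x) := by
  have hπ := Real.pi_pos
  have hd : Real.sin φ₁ - Real.sin x
      = 2 * Real.sin ((φ₁ - x)/2) * Real.cos ((φ₁ + x)/2) := Real.sin_sub_sin φ₁ x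
  have ht : Real.sin ((φ₁ - x)/2) ≤ (φ₁ - x)/2 := Real.sin_le (by linarith)
  have ht0 : 0 ≤ Real.sin ((φ₁ - x)/2) :=
    Real.sin_nonneg_of_nonneg_of_le_pi (by linarith) (by linarith)
  have hc1 : Real.cos ((φ₁ + x)/2) ≤ 1 := Real.cos_le_one _
  have hc0 : 0 ≤ Real.cos ((φ₁ + x)/2) :=
    Real.cos_nonneg_of_mem_Icc ⟨by linarith, by linarith⟩
  have hdle : Real.sin φ₁ - Real.sin x ≤ φ₁ - x := by rw [hd]; nlinarith
  have hd0 : 0 ≤ Real.sin φ₁ - Real.sin x := by rw [hd]; positivity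
  have h1' : Real.sin φ₁ ≤ 1 := Real.sin_le_one _
  have hsx : 0 ≤ Real.sin x := Real.sin_nonneg_of_nonneg_of_le_pi hx0 (by linarith)
  have hsx1 : Real.sin x ≤ 1 := Real.sin_le_one _
  nlinarith

lemma G_meas (φ₁ : ℝ) : Measurable (G φ₁) := by
  unfold G
  simp only [one_div]
  exact ((Real.continuous_sqrt.comp (by continuity)).measurable).inv

lemma intG (h1 : 0 < φ₁) (h2 : φ₁ < π / 2) :
    IntervalIntegrable (G φ₁) volume 0 φ₁ := by
  have hm := mC_pos h1 h2
  set c := mC φ₁ with hc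
  have hbdint : IntervalIntegrable
      (fun x => (1 / Real.sqrt c) * ((φ₁ - x) ^ (-(1/2 : ℝ)))) volume 0 φ₁ := by
    have := ((intervalIntegrable_rpow' (a := 0) (b := φ₁) (r := -(1/2 : ℝ))
      (by norm_num)).comp_sub_left φ₁).symm
    simpa using this.const_mul (1 / Real.sqrt c)
  refine hbdint.mono_fun ((G_meas φ₁).aestronglyMeasurable) ?_
  refine (ae_restrict_iff' measurableSet_uIoc).mpr (ae_of_all _ ?_)
  intro x hx
  rw [Set.uIoc_of_le (by linarith : (0:ℝ) ≤ φ₁)] at hx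
  obtain ⟨hx0, hx1⟩ := hx
  simp only [Real.norm_eq_abs]
  have hB0 : 0 ≤ 1 / Real.sqrt c * (φ₁ - x) ^ (-(1/2:ℝ)) := by
    have : (0:ℝ) ≤ φ₁ - x := by linarith
    positivity
  have hG0 : 0 ≤ G φ₁ x := by unfold G; positivity
  rw [abs_of_nonneg hG0, abs_of_nonneg hB0]
  rcases eq_or_lt_of_le hx1 with he | hlt
  · rw [he]
    simp [G, Real.zero_rpow (by norm_num : -(1/2:ℝ) ≠ 0)]
  · have hlb := lbG h1 h2 hx0.le hx1
    have hpos : 0 < c * (φ₁ - x) := mul_pos hm (by linarith)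
    have hle : Real.sqrt (c * (φ₁ - x)) ≤
        Real.sqrt (Real.sin φ₁ ^ 2 - Real.sin x ^ 2) := Real.sqrt_le_sqrt hlb
    have hsp : 0 < Real.sqrt (c * (φ₁ - x)) := Real.sqrt_pos.mpr hpos
    have hmain : G φ₁ x ≤ 1 / Real.sqrt (c * (φ₁ - x)) :=
      one_div_le_one_div_of_le hsp hle
    calc G φ₁ x ≤ 1 / Real.sqrt (c * (φ₁ - x)) := hmain
      _ = 1 / Real.sqrt c * (φ₁ - x) ^ (-(1/2:ℝ)) := by
          rw [Real.sqrt_mul hm.le, Real.rpow_neg (by linarith : (0:ℝ) ≤ φ₁ - x),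
            ← Real.sqrt_eq_rpow, one_div, mul_inv, ← one_div]


lemma b_lt_one (h1 : 0 < φ₁) (h2 : φ₁ < π / 2) : Real.sin φ₁ ^ 2 < 1 := by
  have := sin_pos' h1 h2; have := sin_lt_one' h1 h2; nlinarith

lemma H_denom_pos (h1 : 0 < φ₁) (h2 : φ₁ < π / 2) (θ : ℝ) :
    0 < 1 - Real.sin φ₁ ^ 2 * Real.sin θ ^ 2 := by
  have hb := b_lt_one h1 h2
  have hb0 : 0 ≤ Real.sin φ₁ ^ 2 := sq_nonneg _
  have h1' : Real.sin θ ^ 2 ≤ 1 := Real.sin_sq_le_one θ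
  nlinarith

lemma H_cont (h1 : 0 < φ₁) (h2 : φ₁ < π / 2) : Continuous (H φ₁) := by
  unfold H
  apply Continuous.div continuous_const
    (Real.continuous_sqrt.comp (by continuity))
  intro θ
  exact ne_of_gt (Real.sqrt_pos.mpr (H_denom_pos h1 h2 θ))

lemma G_contAt (h : 0 < Real.sin φ₁ ^ 2 - Real.sin x ^ 2) :
    ContinuousAt (G φ₁) x := by
  unfold G
  exact continuousAt_const.div
    ((Real.continuous_sqrt.comp (by continuity)).continuousAt)
    (ne_of_gt (Real.sqrt_pos.mpr h))

lemma subEq (h1 : 0 < φ₁) (h2 : φ₁ < π / 2) {c : ℝ} (hc0 : 0 ≤ c) (hc : c < π / 2) :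
    ∫ θ in (0:ℝ)..c, H φ₁ θ =
      ∫ x in (0:ℝ)..(Real.arcsin (Real.sin φ₁ * Real.sin c)), G φ₁ x := by
  have hπ := Real.pi_pos
  have hsφ := sin_pos' h1 h2
  have hs1 := sin_lt_one' h1 h2
  set g : ℝ → ℝ := fun θ => Real.arcsin (Real.sin φ₁ * Real.sin θ) with hgdef
  set g' : ℝ → ℝ := fun θ => H φ₁ θ * (Real.sin φ₁ * Real.cos θ) with hg'def
  have habs : ∀ θ : ℝ, |Real.sin φ₁ * Real.sin θ| < 1 := by
    intro θ
    rw [abs_mul, abs_of_pos hsφ]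
    have h1' : |Real.sin θ| ≤ 1 := Real.abs_sin_le_one θ
    nlinarith [abs_nonneg (Real.sin θ)]
  have hderiv : ∀ θ ∈ uIcc (0:ℝ) c, HasDerivAt g (g' θ) θ := by
    intro θ _
    have hne1 : Real.sin φ₁ * Real.sin θ ≠ -1 := by
      intro h; have := habs θ; rw [h] at this; simp at this
    have hne2 : Real.sin φ₁ * Real.sin θ ≠ 1 := by
      intro h; have := habs θ; rw [h] at this; simp at this
    have hD := (Real.hasDerivAt_arcsin hne1 hne2).comp θ
      ((Real.hasDerivAt_sin θ).const_mul (Real.sin φ₁))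
    refine hD.congr_deriv (Eq.symm ?_)
    simp only [hg'def, H, Function.comp]
    rw [mul_pow]
  have hcg' : ContinuousOn g' (uIcc (0:ℝ) c) :=
    ((H_cont h1 h2).mul (continuous_const.mul Real.continuous_cos)).continuousOn
  have hsinmem : ∀ θ : ℝ, -1 ≤ Real.sin φ₁ * Real.sin θ ∧ Real.sin φ₁ * Real.sin θ ≤ 1 := by
    intro θ
    have := habs θ; constructor <;> [linarith [neg_abs_le (Real.sin φ₁ * Real.sin θ)];
      linarith [le_abs_self (Real.sin φ₁ * Real.sin θ)]]
  have himg : ContinuousOn (G φ₁) (g '' uIcc (0:ℝ) c) := by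
    rintro y ⟨θ, hθ, rfl⟩
    have hθ' : θ ∈ Icc 0 c := by rwa [uIcc_of_le hc0] at hθ
    have hsin : Real.sin (g θ) = Real.sin φ₁ * Real.sin θ :=
      Real.sin_arcsin (hsinmem θ).1 (hsinmem θ).2
    have hsc : Real.sin θ ^ 2 ≤ Real.sin c ^ 2 := by
      have h0 : 0 ≤ Real.sin θ :=
        Real.sin_nonneg_of_nonneg_of_le_pi hθ'.1 (by linarith [hθ'.2])
      have hmono : Real.sin θ ≤ Real.sin c := by
        rcases eq_or_lt_of_le hθ'.2 with h | h
        · rw [h]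
        · exact le_of_lt (Real.strictMonoOn_sin
            ⟨by linarith [hθ'.1], by linarith [hθ'.2]⟩ ⟨by linarith, hc.le⟩ h)
      nlinarith
    have hc2 : Real.sin c ^ 2 < 1 := by
      have h0 : 0 ≤ Real.sin c := Real.sin_nonneg_of_nonneg_of_le_pi hc0 (by linarith)
      have : Real.sin c < 1 := by
        have := Real.strictMonoOn_sin (a := c) (b := π/2)
          ⟨by linarith, hc.le⟩ ⟨by linarith, le_refl _⟩ hc
        simpa using this
      nlinarith
    have hpos : 0 < Real.sin φ₁ ^ 2 - Real.sin (g θ) ^ 2 := by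
      rw [hsin, mul_pow]
      nlinarith [mul_lt_mul_of_pos_left (lt_of_le_of_lt hsc hc2)
        (by positivity : (0:ℝ) < Real.sin φ₁ ^ 2)]
    exact (G_contAt hpos).continuousWithinAt
  have hsub := integral_comp_smul_deriv' hderiv hcg' himg
  have hg0 : g 0 = 0 := by simp [hgdef]
  rw [hg0] at hsub
  rw [← hsub]
  apply integral_congr
  intro θ hθ
  have hθ' : θ ∈ Icc 0 c := by rwa [uIcc_of_le hc0] at hθ
  have hcosθ : 0 < Real.cos θ :=
    Real.cos_pos_of_mem_Ioo ⟨by linarith [hθ'.1], by linarith [hθ'.2]⟩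
  have hsin : Real.sin (g θ) = Real.sin φ₁ * Real.sin θ :=
    Real.sin_arcsin (hsinmem θ).1 (hsinmem θ).2
  have hGg : G φ₁ (g θ) = 1 / (Real.sin φ₁ * Real.cos θ) := by
    unfold G
    rw [hsin, mul_pow]
    have : Real.sin φ₁ ^ 2 - Real.sin φ₁ ^ 2 * Real.sin θ ^ 2
        = (Real.sin φ₁ * Real.cos θ) ^ 2 := by
      have := Real.sin_sq_add_cos_sq θ; nlinarith
    rw [this, Real.sqrt_sq (by positivity)]
  show H φ₁ θ = g' θ • G φ₁ (g θ)
  rw [smul_eq_mul, hGg, hg'def]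
  field_simp


lemma keyIdentity (h1 : 0 < φ₁) (h2 : φ₁ < π / 2) :
    ∫ x in (0:ℝ)..φ₁, G φ₁ x = ∫ θ in (0:ℝ)..(π/2), H φ₁ θ := by
  have hπ := Real.pi_pos
  have hsφ := sin_pos' h1 h2
  set g : ℝ → ℝ := fun c => Real.arcsin (Real.sin φ₁ * Real.sin c) with hgdef
  have hHint : ∀ a b : ℝ, IntervalIntegrable (H φ₁) volume a b :=
    fun a b => (H_cont h1 h2).intervalIntegrable a b
  have hF1 : Tendsto (fun c => ∫ θ in (0:ℝ)..c, H φ₁ θ)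
      (nhdsWithin (π/2) (Iio (π/2))) (nhds (∫ θ in (0:ℝ)..(π/2), H φ₁ θ)) :=
    ((intervalIntegral.continuous_primitive hHint 0).tendsto (π/2)).mono_left
      nhdsWithin_le_nhds
  have hGio : IntegrableOn (G φ₁) (uIcc (0:ℝ) φ₁) volume := by
    rw [uIcc_of_le h1.le]
    exact (intervalIntegrable_iff_integrableOn_Icc_of_le h1.le).mp (intG h1 h2)
  have hprim : ContinuousOn (fun y => ∫ x in (0:ℝ)..y, G φ₁ x) (uIcc (0:ℝ) φ₁) :=
    intervalIntegral.continuousOn_primitive_interval hGio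
  have hcw := hprim φ₁ right_mem_uIcc
  have hIoo : Ioo (0:ℝ) (π/2) ∈ nhdsWithin (π/2) (Iio (π/2)) :=
    Ioo_mem_nhdsLT_of_mem ⟨by linarith, le_refl _⟩
  have hgc : Tendsto g (nhdsWithin (π/2) (Iio (π/2)))
      (nhdsWithin φ₁ (uIcc (0:ℝ) φ₁)) := by
    apply tendsto_nhdsWithin_of_tendsto_nhds_of_eventually_within _
    · have hcont : ContinuousAt g (π/2) :=
        (Real.continuous_arcsin.comp (continuous_const.mul Real.continuous_sin)).continuousAt
      have hval : g (π/2) = φ₁ := by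
        simp only [hgdef, Real.sin_pi_div_two, mul_one]
        exact Real.arcsin_sin (by linarith) (by linarith)
      rw [← hval]
      exact hcont.tendsto.mono_left nhdsWithin_le_nhds
    · filter_upwards [hIoo] with c hc
      rw [uIcc_of_le h1.le]
      constructor
      · exact Real.arcsin_nonneg.mpr (mul_nonneg hsφ.le
          (Real.sin_nonneg_of_nonneg_of_le_pi hc.1.le (by linarith [hc.2])))
      · have hle : Real.sin φ₁ * Real.sin c ≤ Real.sin φ₁ := by
          nlinarith [Real.sin_le_one c,
            Real.sin_nonneg_of_nonneg_of_le_pi hc.1.le (by linarith [hc.2])]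
        have := Real.monotone_arcsin hle
        rwa [Real.arcsin_sin (by linarith) (by linarith)] at this
  have hF2 : Tendsto (fun c => ∫ x in (0:ℝ)..(g c), G φ₁ x)
      (nhdsWithin (π/2) (Iio (π/2))) (nhds (∫ x in (0:ℝ)..φ₁, G φ₁ x)) :=
    hcw.tendsto.comp hgc
  have heq : (fun c => ∫ θ in (0:ℝ)..c, H φ₁ θ)
      =ᶠ[nhdsWithin (π/2) (Iio (π/2))] fun c => ∫ x in (0:ℝ)..(g c), G φ₁ x := by
    filter_upwards [hIoo] with c hc
    exact subEq h1 h2 hc.1.le hc.2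
  exact (tendsto_nhds_unique (hF1.congr' heq) hF2).symm


lemma ae_ne_pt (p : ℝ) : ∀ᵐ x : ℝ, x ≠ p := by
  refine MeasureTheory.ae_iff.mpr ?_
  simp only [ne_eq, not_not, Set.setOf_eq_eq_singleton]
  exact Real.volume_singleton

lemma tendstoK (h1 : 0 < φ₁) (h2 : φ₁ < π / 2) :
    Tendsto (fun a => ∫ θ in (0:ℝ)..(π/2), 1 / Real.sqrt (1 - a * Real.sin θ ^ 2))
      (nhdsWithin (Real.sin φ₁ ^ 2) (Ioi (Real.sin φ₁ ^ 2)))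
      (nhds (∫ θ in (0:ℝ)..(π/2), H φ₁ θ)) := by
  have hπ := Real.pi_pos
  set b := Real.sin φ₁ ^ 2 with hbdef
  have hb1 : b < 1 := b_lt_one h1 h2
  have hb0 : 0 < b := pow_pos (sin_pos' h1 h2) 2
  have hIoo : Ioo b ((1+b)/2) ∈ nhdsWithin b (Ioi b) :=
    Ioo_mem_nhdsGT_of_mem ⟨le_refl _, by linarith⟩
  apply intervalIntegral.tendsto_integral_filter_of_dominated_convergence
    (bound := fun _ => 1 / Real.sqrt ((1-b)/2))
  · apply Filter.Eventually.of_forall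
    intro a
    simp only [one_div]
    exact (((Real.continuous_sqrt.comp (by continuity)).measurable).inv).aestronglyMeasurable
  · filter_upwards [hIoo] with a ha
    apply ae_of_all
    intro θ _
    have hs1 : Real.sin θ ^ 2 ≤ 1 := Real.sin_sq_le_one θ
    have hden : (1-b)/2 ≤ 1 - a * Real.sin θ ^ 2 := by
      nlinarith [ha.1, ha.2, sq_nonneg (Real.sin θ)]
    have hp : 0 < Real.sqrt ((1-b)/2) := Real.sqrt_pos.mpr (by linarith)
    have : 1 / Real.sqrt (1 - a * Real.sin θ ^ 2) ≤ 1 / Real.sqrt ((1-b)/2) :=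
      one_div_le_one_div_of_le hp (Real.sqrt_le_sqrt hden)
    calc ‖1 / Real.sqrt (1 - a * Real.sin θ ^ 2)‖
        = 1 / Real.sqrt (1 - a * Real.sin θ ^ 2) := by
          rw [Real.norm_eq_abs, abs_of_nonneg (by positivity)]
      _ ≤ 1 / Real.sqrt ((1-b)/2) := this
  · exact intervalIntegrable_const
  · apply ae_of_all
    intro θ _
    have hden : 0 < 1 - b * Real.sin θ ^ 2 := H_denom_pos h1 h2 θ
    have hca : ContinuousAt (fun a : ℝ => 1 / Real.sqrt (1 - a * Real.sin θ ^ 2)) b := by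
      apply ContinuousAt.div continuousAt_const
      · exact Real.continuous_sqrt.continuousAt.comp
          ((continuousAt_const.sub (continuousAt_id.mul continuousAt_const)))
      · exact ne_of_gt (Real.sqrt_pos.mpr hden)
    exact hca.tendsto.mono_left nhdsWithin_le_nhds

lemma tendstoI {φ₀ : ℝ} (h0 : 0 < φ₀) (h01 : φ₀ < φ₁) (h2 : φ₁ < π / 2) :
    Tendsto (fun a => ∫ x in φ₀..φ₁, 1 / Real.sqrt (a - Real.sin x ^ 2))
      (nhdsWithin (Real.sin φ₁ ^ 2) (Ioi (Real.sin φ₁ ^ 2)))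
      (nhds (∫ x in φ₀..φ₁, G φ₁ x)) := by
  have h1 : 0 < φ₁ := h0.trans h01
  set b := Real.sin φ₁ ^ 2 with hbdef
  have hGsub : IntervalIntegrable (G φ₁) volume φ₀ φ₁ := by
    apply (intG h1 h2).mono_set
    rw [uIcc_of_le h01.le, uIcc_of_le h1.le]
    exact Icc_subset_Icc h0.le (le_refl _)
  apply intervalIntegral.tendsto_integral_filter_of_dominated_convergence
    (bound := G φ₁)
  · apply Filter.Eventually.of_forall
    intro a
    simp only [one_div]
    exact (((Real.continuous_sqrt.comp (by continuity)).measurable).inv).aestronglyMeasurable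
  · filter_upwards [self_mem_nhdsWithin] with a ha
    filter_upwards [ae_ne_pt φ₁] with x hxne hxmem
    rw [uIoc_of_le h01.le] at hxmem
    have hx1 : x < φ₁ := lt_of_le_of_ne hxmem.2 hxne
    have hbx : 0 < b - Real.sin x ^ 2 :=
      sub_pos.mpr (sq_lt h2.le (le_of_lt (h0.trans hxmem.1)) hx1)
    have hax : b - Real.sin x ^ 2 ≤ a - Real.sin x ^ 2 := by
      have : b < a := ha
      linarith
    have hp : 0 < Real.sqrt (b - Real.sin x ^ 2) := Real.sqrt_pos.mpr hbx
    have hle : 1 / Real.sqrt (a - Real.sin x ^ 2) ≤ G φ₁ x :=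
      one_div_le_one_div_of_le hp (Real.sqrt_le_sqrt hax)
    calc ‖1 / Real.sqrt (a - Real.sin x ^ 2)‖
        = 1 / Real.sqrt (a - Real.sin x ^ 2) := by
          rw [Real.norm_eq_abs, abs_of_nonneg (by positivity)]
      _ ≤ G φ₁ x := hle
  · exact hGsub
  · filter_upwards [ae_ne_pt φ₁] with x hxne hxmem
    rw [uIoc_of_le h01.le] at hxmem
    have hx1 : x < φ₁ := lt_of_le_of_ne hxmem.2 hxne
    have hbx : 0 < b - Real.sin x ^ 2 :=
      sub_pos.mpr (sq_lt h2.le (le_of_lt (h0.trans hxmem.1)) hx1)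
    have hca : ContinuousAt (fun a : ℝ => 1 / Real.sqrt (a - Real.sin x ^ 2)) b := by
      apply ContinuousAt.div continuousAt_const
      · exact Real.continuous_sqrt.continuousAt.comp
          (continuousAt_id.sub continuousAt_const)
      · exact ne_of_gt (Real.sqrt_pos.mpr hbx)
    have : G φ₁ x = 1 / Real.sqrt (b - Real.sin x ^ 2) := rfl
    rw [this]
    exact hca.tendsto.mono_left nhdsWithin_le_nhds


lemma lipsch {u v A : ℝ} (hA : 0 < A) (hv : A^2 ≤ v) (huv : v ≤ u) :
    1/Real.sqrt v ≤ 1/Real.sqrt u + (u - v)/(2*A^3) := by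
  have hv0 : 0 < v := lt_of_lt_of_le (by positivity) hv
  have hu0 : 0 < u := lt_of_lt_of_le hv0 huv
  have hsv : 0 < Real.sqrt v := Real.sqrt_pos.mpr hv0
  have hsu : 0 < Real.sqrt u := Real.sqrt_pos.mpr hu0
  have hsvA : A ≤ Real.sqrt v := by
    have := Real.sqrt_le_sqrt hv
    rwa [Real.sqrt_sq hA.le] at this
  have hsuv : Real.sqrt v ≤ Real.sqrt u := Real.sqrt_le_sqrt huv
  have hsq : Real.sqrt v ^ 2 = v := Real.sq_sqrt hv0.le
  have hsqu : Real.sqrt u ^ 2 = u := Real.sq_sqrt hu0.le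
  rw [div_add_div _ _ (ne_of_gt hsu) (by positivity), div_le_div_iff₀ hsv (by positivity)]
  nlinarith [mul_le_mul hsvA hsvA hA.le hsv.le,
    mul_le_mul_of_nonneg_left (mul_le_mul hsvA hsvA hA.le hsv.le)
      (by linarith : (0:ℝ) ≤ Real.sqrt u - Real.sqrt v),
    mul_le_mul_of_nonneg_left (mul_le_mul hsvA hsuv hsv.le hsv.le)
      (by linarith : (0:ℝ) ≤ Real.sqrt u - Real.sqrt v),
    sq_nonneg (Real.sqrt u - Real.sqrt v), mul_pos hsv hsu]

lemma deficit {u δ w : ℝ} (hu : 0 < u) (hδ : 0 < δ) (hw : u + δ ≤ w) :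
    δ/(2*w*Real.sqrt w) ≤ 1/Real.sqrt u - 1/Real.sqrt (u+δ) := by
  have hud : 0 < u + δ := by linarith
  have hw0 : 0 < w := by linarith
  have hsu : 0 < Real.sqrt u := Real.sqrt_pos.mpr hu
  have hst : 0 < Real.sqrt (u+δ) := Real.sqrt_pos.mpr hud
  have hsw : 0 < Real.sqrt w := Real.sqrt_pos.mpr hw0
  have h1 : Real.sqrt u ≤ Real.sqrt (u+δ) := Real.sqrt_le_sqrt (by linarith)
  have h2 : Real.sqrt (u+δ) ≤ Real.sqrt w := Real.sqrt_le_sqrt hw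
  have e1 : Real.sqrt u ^ 2 = u := Real.sq_sqrt hu.le
  have e2 : Real.sqrt (u+δ) ^ 2 = u + δ := Real.sq_sqrt hud.le
  have e3 : Real.sqrt w ^ 2 = w := Real.sq_sqrt hw0.le
  rw [div_sub_div _ _ (ne_of_gt hsu) (ne_of_gt hst), div_le_div_iff₀ (by positivity) (by positivity)]
  -- goal: δ * (√u * √(u+δ)) ≤ (√(u+δ) - √u) * (2*w*√w)
  have key : (Real.sqrt (u+δ) - Real.sqrt u) * (Real.sqrt (u+δ) + Real.sqrt u) = δ := by
    nlinarith
  have hA : Real.sqrt u * Real.sqrt (u+δ) ≤ Real.sqrt w * Real.sqrt w :=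
    mul_le_mul (h1.trans h2) h2 hst.le hsw.le
  have hB : Real.sqrt (u+δ) + Real.sqrt u ≤ 2 * Real.sqrt w := by linarith
  have hC : (Real.sqrt (u+δ) + Real.sqrt u) * (Real.sqrt u * Real.sqrt (u+δ))
      ≤ (2 * Real.sqrt w) * (Real.sqrt w * Real.sqrt w) :=
    mul_le_mul hB hA (by positivity) (by positivity)
  have hD := mul_le_mul_of_nonneg_left hC
    (by linarith : (0:ℝ) ≤ Real.sqrt (u+δ) - Real.sqrt u)
  have key2 : δ * (Real.sqrt u * Real.sqrt (u+δ))
      = (Real.sqrt (u+δ) - Real.sqrt u)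
        * ((Real.sqrt (u+δ) + Real.sqrt u) * (Real.sqrt u * Real.sqrt (u+δ))) := by
    linear_combination (-(Real.sqrt u * Real.sqrt (u+δ))) * key
  have hE : (Real.sqrt (u+δ) - Real.sqrt u) * (2 * Real.sqrt w * (Real.sqrt w * Real.sqrt w))
      = (Real.sqrt (u+δ) - Real.sqrt u) * (2 * w * Real.sqrt w) := by
    linear_combination (2 * (Real.sqrt (u+δ) - Real.sqrt u) * Real.sqrt w) * e3
  nlinarith [hD, key2, hE]

variable {φ₀ : ℝ}

lemma intG' (h0 : 0 < φ₀) (h01 : φ₀ < φ₁) (h2 : φ₁ < π / 2) :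
    IntervalIntegrable (G φ₁) volume φ₀ φ₁ := by
  apply (intG (h0.trans h01) h2).mono_set
  rw [uIcc_of_le h01.le, uIcc_of_le (h0.trans h01).le]
  exact Icc_subset_Icc h0.le (le_refl _)

lemma intG0 (h0 : 0 < φ₀) (h01 : φ₀ < φ₁) (h2 : φ₁ < π / 2) :
    IntervalIntegrable (G φ₁) volume 0 φ₀ := by
  apply (intG (h0.trans h01) h2).mono_set
  rw [uIcc_of_le h0.le, uIcc_of_le (h0.trans h01).le]
  exact Icc_subset_Icc (le_refl _) h01.le

lemma T_repr (h1 : 0 < φ₁) (h2 : φ₁ < π / 2) (φ : ℝ) :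
    (∫ x in (0:ℝ)..φ, 1 / Real.sqrt (Real.cos (2*x) - Real.cos (2*φ₁)))
      = (1 / Real.sqrt 2) * ∫ x in (0:ℝ)..φ, G φ₁ x := by
  rw [← intervalIntegral.integral_const_mul]
  apply integral_congr
  intro x _
  exact pointEq φ₁ x

lemma value_eq (h0 : 0 < φ₀) (h01 : φ₀ < φ₁) (h2 : φ₁ < π / 2) :
    Real.sqrt 2 * (∫ θ in (0:ℝ)..(π/2), H φ₁ θ)
      + (1 / Real.sqrt 2) * (∫ x in φ₀..φ₁, G φ₁ x)
    = 3 * (∫ x in (0:ℝ)..φ₁, 1 / Real.sqrt (Real.cos (2*x) - Real.cos (2*φ₁)))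
      - ∫ x in (0:ℝ)..φ₀, 1 / Real.sqrt (Real.cos (2*x) - Real.cos (2*φ₁)) := by
  have h1 : 0 < φ₁ := h0.trans h01
  rw [T_repr h1 h2 φ₁, T_repr h1 h2 φ₀]
  rw [← keyIdentity h1 h2]
  have hadd : (∫ x in (0:ℝ)..φ₀, G φ₁ x) + (∫ x in φ₀..φ₁, G φ₁ x)
      = ∫ x in (0:ℝ)..φ₁, G φ₁ x :=
    integral_add_adjacent_intervals (intG0 h0 h01 h2) (intG' h0 h01 h2)
  have hs2 : Real.sqrt 2 * Real.sqrt 2 = 2 := Real.mul_self_sqrt (by norm_num)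
  have hne : Real.sqrt 2 ≠ 0 := by positivity
  set J := ∫ x in (0:ℝ)..φ₁, G φ₁ x
  set J₀ := ∫ x in (0:ℝ)..φ₀, G φ₁ x
  have hIG : (∫ x in φ₀..φ₁, G φ₁ x) = J - J₀ := by rw [← hadd]; ring
  rw [hIG]
  field_simp
  linear_combination J * hs2


lemma lower_bound_K {a : ℝ} (ha1 : 1/2 < a) (ha2 : a < 1) :
    (1/Real.sqrt 2) * (Real.log (π/2) - Real.log (Real.sqrt (1-a)))
      ≤ ∫ θ in (0:ℝ)..(π/2), 1 / Real.sqrt (1 - a * Real.sin θ ^ 2) := by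
  have hπ := Real.pi_pos
  have hπ3 := Real.pi_gt_three
  set c := 1 - a with hc
  have hc0 : 0 < c := by simp only [hc]; linarith
  have hc1 : c < 1/2 := by simp only [hc]; linarith
  have hsc : Real.sqrt c ≤ 1 := by
    rw [show (1:ℝ) = Real.sqrt 1 by simp]
    exact Real.sqrt_le_sqrt (by linarith)
  have hscpos : 0 < Real.sqrt c := Real.sqrt_pos.mpr hc0
  set u := π/2 - Real.sqrt c with hu
  have hu0 : 0 ≤ u := by simp only [hu]; nlinarith
  have hupi : u ≤ π/2 := by simp only [hu]; nlinarith
  have hca : Continuous (fun θ : ℝ => 1 / Real.sqrt (1 - a * Real.sin θ^2)) := by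
    apply Continuous.div continuous_const (Real.continuous_sqrt.comp (by continuity))
    intro θ
    have h1 : Real.sin θ^2 ≤ 1 := Real.sin_sq_le_one θ
    have h' : 0 < 1 - a*Real.sin θ^2 := by nlinarith [sq_nonneg (Real.sin θ)]
    exact ne_of_gt (Real.sqrt_pos.mpr h')
  have hcb : Continuous (fun θ : ℝ => 1 / Real.sqrt (c + (π/2 - θ)^2)) := by
    apply Continuous.div continuous_const (Real.continuous_sqrt.comp (by continuity))
    intro θ
    have h' : 0 < c + (π/2 - θ)^2 := by positivity
    exact ne_of_gt (Real.sqrt_pos.mpr h')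
  have step1 : (∫ θ in (0:ℝ)..(π/2), 1 / Real.sqrt (c + (π/2-θ)^2))
      ≤ ∫ θ in (0:ℝ)..(π/2), 1 / Real.sqrt (1 - a*Real.sin θ^2) := by
    apply integral_mono_on (by linarith) (hcb.intervalIntegrable _ _)
      (hca.intervalIntegrable _ _)
    intro θ hθ
    have hcos : Real.cos θ ≤ π/2 - θ := by
      rw [← Real.sin_pi_div_two_sub]
      exact Real.sin_le (by linarith [hθ.2])
    have hcos0 : 0 ≤ Real.cos θ := Real.cos_nonneg_of_mem_Icc ⟨by linarith [hθ.1], hθ.2⟩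
    have hpv := Real.sin_sq_add_cos_sq θ
    have hkey : 1 - a*Real.sin θ^2 ≤ c + (π/2-θ)^2 := by nlinarith
    have hpos : 0 < 1 - a*Real.sin θ^2 := by
      nlinarith [Real.sin_sq_le_one θ, sq_nonneg (Real.sin θ)]
    exact one_div_le_one_div_of_le (Real.sqrt_pos.mpr hpos) (Real.sqrt_le_sqrt hkey)
  have step2 : (∫ θ in (0:ℝ)..u, 1 / Real.sqrt (c + (π/2-θ)^2))
      ≤ ∫ θ in (0:ℝ)..(π/2), 1 / Real.sqrt (c + (π/2-θ)^2) := by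
    rw [← integral_add_adjacent_intervals (hcb.intervalIntegrable 0 u)
      (hcb.intervalIntegrable u (π/2))]
    have h' : 0 ≤ ∫ θ in u..(π/2), 1 / Real.sqrt (c + (π/2-θ)^2) :=
      integral_nonneg hupi (fun θ _ => by positivity)
    linarith
  have step3 : (∫ θ in (0:ℝ)..u, (1/Real.sqrt 2) * (1/(π/2 - θ)))
      ≤ ∫ θ in (0:ℝ)..u, 1 / Real.sqrt (c + (π/2-θ)^2) := by
    have hcc : ContinuousOn (fun θ : ℝ => (1/Real.sqrt 2) * (1/(π/2 - θ))) (uIcc 0 u) := by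
      rw [uIcc_of_le hu0]
      apply ContinuousOn.mul continuousOn_const
      apply ContinuousOn.div continuousOn_const (by fun_prop)
      intro θ hθ
      have : Real.sqrt c ≤ π/2 - θ := by
        simp only [hu] at hθ; linarith [hθ.2]
      linarith
    apply integral_mono_on hu0 (hcc.intervalIntegrable) (hcb.intervalIntegrable _ _)
    intro θ hθ
    have ht : Real.sqrt c ≤ π/2 - θ := by simp only [hu] at hθ; linarith [hθ.2]
    have ht0 : 0 < π/2 - θ := lt_of_lt_of_le hscpos ht
    have hcle : c ≤ (π/2-θ)^2 := by
      nlinarith [Real.sq_sqrt hc0.le, Real.sqrt_nonneg c]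
    have h2t : Real.sqrt (c + (π/2-θ)^2) ≤ Real.sqrt 2 * (π/2-θ) := by
      rw [show Real.sqrt 2 * (π/2-θ) = Real.sqrt (2 * (π/2-θ)^2) by
        rw [Real.sqrt_mul (by norm_num), Real.sqrt_sq ht0.le]]
      exact Real.sqrt_le_sqrt (by nlinarith)
    have hp : 0 < Real.sqrt (c + (π/2-θ)^2) := Real.sqrt_pos.mpr (by positivity)
    have h3 := one_div_le_one_div_of_le hp h2t
    rw [show (1/Real.sqrt 2) * (1/(π/2-θ)) = 1/(Real.sqrt 2 * (π/2-θ)) from by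
      rw [div_mul_div_comm, one_mul]]
    exact h3
  have step4 : (∫ θ in (0:ℝ)..u, (1/Real.sqrt 2) * (1/(π/2 - θ)))
      = (1/Real.sqrt 2) * (Real.log (π/2) - Real.log (Real.sqrt c)) := by
    have hderiv : ∀ θ ∈ uIcc (0:ℝ) u,
        HasDerivAt (fun y : ℝ => -(1/Real.sqrt 2) * Real.log (π/2 - y))
          ((1/Real.sqrt 2) * (1/(π/2 - θ))) θ := by
      intro θ hθ
      rw [uIcc_of_le hu0] at hθ
      have ht : Real.sqrt c ≤ π/2 - θ := by simp only [hu] at hθ; linarith [hθ.2]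
      have ht0 : 0 < π/2 - θ := lt_of_lt_of_le hscpos ht
      have hin : HasDerivAt (fun y : ℝ => π/2 - y) (-1) θ := by
        simpa using (hasDerivAt_id θ).const_sub (π/2)
      have hlog := (Real.hasDerivAt_log (ne_of_gt ht0)).comp θ hin
      have := hlog.const_mul (-(1/Real.sqrt 2))
      refine this.congr_deriv (Eq.symm ?_)
      field_simp
    have hcc : ContinuousOn (fun θ : ℝ => (1/Real.sqrt 2) * (1/(π/2 - θ))) (uIcc 0 u) := by
      rw [uIcc_of_le hu0]
      apply ContinuousOn.mul continuousOn_const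
      apply ContinuousOn.div continuousOn_const (by fun_prop)
      intro θ hθ
      have : Real.sqrt c ≤ π/2 - θ := by simp only [hu] at hθ; linarith [hθ.2]
      linarith
    rw [integral_eq_sub_of_hasDerivAt hderiv hcc.intervalIntegrable]
    have : π/2 - u = Real.sqrt c := by simp [hu]
    rw [this]
    simp
    ring
  linarith


lemma Kle (h1 : 0 < φ₁) (h2 : φ₁ < π / 2) {a : ℝ} (hab : Real.sin φ₁ ^ 2 < a)
    (hd : a - Real.sin φ₁ ^ 2 < (1 - Real.sin φ₁ ^ 2)/2) :
    (∫ θ in (0:ℝ)..(π/2), 1 / Real.sqrt (1 - a * Real.sin θ ^ 2))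
      ≤ (∫ θ in (0:ℝ)..(π/2), H φ₁ θ)
        + (π/2) * ((a - Real.sin φ₁ ^ 2)
            / (2 * Real.sqrt ((1 - Real.sin φ₁ ^ 2)/2) ^ 3)) := by
  have hπ := Real.pi_pos
  set b := Real.sin φ₁ ^ 2 with hbdef
  have hb1 : b < 1 := b_lt_one h1 h2
  have hb0 : 0 < b := pow_pos (sin_pos' h1 h2) 2
  set m₁ := (1 - b)/2 with hm1
  have hm0 : 0 < m₁ := by simp only [hm1]; linarith
  set A := Real.sqrt m₁ with hA
  have hA0 : 0 < A := Real.sqrt_pos.mpr hm0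
  have hA2 : A^2 = m₁ := Real.sq_sqrt hm0.le
  set δ := a - b with hδ
  have hδ0 : 0 < δ := by simp only [hδ]; linarith
  set C := δ / (2 * A^3) with hC
  have hC0 : 0 < C := by positivity
  have hcont : Continuous (fun θ : ℝ => 1 / Real.sqrt (1 - a * Real.sin θ ^ 2)) := by
    apply Continuous.div continuous_const (Real.continuous_sqrt.comp (by continuity))
    intro θ
    have hs := Real.sin_sq_le_one θ
    have h' : 0 < 1 - a * Real.sin θ^2 := by nlinarith [sq_nonneg (Real.sin θ)]
    exact ne_of_gt (Real.sqrt_pos.mpr h')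
  have hmono : (∫ θ in (0:ℝ)..(π/2), 1 / Real.sqrt (1 - a * Real.sin θ ^ 2))
      ≤ ∫ θ in (0:ℝ)..(π/2), (H φ₁ θ + C) := by
    apply integral_mono_on (by linarith) (hcont.intervalIntegrable _ _)
      (((H_cont h1 h2).add continuous_const).intervalIntegrable _ _)
    intro θ _
    have hs := Real.sin_sq_le_one θ
    have hs0 := sq_nonneg (Real.sin θ)
    have hv : m₁ ≤ 1 - a * Real.sin θ^2 := by nlinarith
    have hvu : 1 - a * Real.sin θ^2 ≤ 1 - b * Real.sin θ^2 := by nlinarith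
    have hl := lipsch hA0 (by rw [hA2]; exact hv) hvu
    have hud : (1 - b * Real.sin θ^2) - (1 - a * Real.sin θ^2) ≤ δ := by nlinarith
    have : ((1 - b * Real.sin θ^2) - (1 - a * Real.sin θ^2)) / (2*A^3) ≤ C := by
      rw [hC]
      gcongr
    show _ ≤ H φ₁ θ + C
    unfold H
    linarith
  have hsplit : (∫ θ in (0:ℝ)..(π/2), (H φ₁ θ + C))
      = (∫ θ in (0:ℝ)..(π/2), H φ₁ θ) + (π/2) * C := by
    rw [integral_add ((H_cont h1 h2).intervalIntegrable _ _) intervalIntegrable_const,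
      intervalIntegral.integral_const]
    simp [smul_eq_mul]
  rw [hsplit] at hmono
  simpa [hC, hA, hm1, hδ] using hmono

lemma sq_le (h2 : φ₁ ≤ π / 2) {x : ℝ} (hx0 : 0 ≤ x) (hx : x ≤ φ₁) :
    Real.sin x ^ 2 ≤ Real.sin φ₁ ^ 2 := by
  rcases eq_or_lt_of_le hx with h | h
  · rw [h]
  · exact (sq_lt h2 hx0 h).le

lemma Ile (h0 : 0 < φ₀) (h01 : φ₀ < φ₁) (h2 : φ₁ < π / 2) {a : ℝ}
    (hab : Real.sin φ₁ ^ 2 < a) :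
    (∫ x in φ₀..φ₁, 1 / Real.sqrt (a - Real.sin x ^ 2))
      ≤ (∫ x in φ₀..φ₁, G φ₁ x)
        - (Real.sqrt (a - Real.sin φ₁ ^ 2) / 2
            - ((a - Real.sin φ₁ ^ 2)/2) / Real.sqrt (2*(φ₁ - φ₀))) := by
  have h1 : 0 < φ₁ := h0.trans h01
  set b := Real.sin φ₁ ^ 2 with hbdef
  set δ := a - b with hδdef
  have hδ0 : 0 < δ := by simp only [hδdef]; linarith
  set w : ℝ → ℝ := fun x => 2*(φ₁ - x) + δ with hwdef
  set ψ : ℝ → ℝ := fun x => δ / (2 * w x * Real.sqrt (w x)) with hψdef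
  have hwpos : ∀ x ∈ Icc φ₀ φ₁, 0 < w x := fun x hx => by
    simp only [hwdef]; nlinarith [hx.2]
  have hfacont : ContinuousOn (fun x => 1 / Real.sqrt (a - Real.sin x ^ 2))
      (uIcc φ₀ φ₁) := by
    rw [uIcc_of_le h01.le]
    intro x hx
    have hsq : Real.sin x ^ 2 ≤ b := sq_le h2.le (by linarith [hx.1, h0]) hx.2
    have hpos : 0 < a - Real.sin x ^ 2 := by linarith
    apply ContinuousAt.continuousWithinAt
    apply ContinuousAt.div continuousAt_const
      (Real.continuous_sqrt.continuousAt.comp (by fun_prop))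
    exact ne_of_gt (Real.sqrt_pos.mpr hpos)
  have hfaint : IntervalIntegrable (fun x => 1 / Real.sqrt (a - Real.sin x ^ 2))
      volume φ₀ φ₁ := hfacont.intervalIntegrable
  have hψcont : ContinuousOn ψ (uIcc φ₀ φ₁) := by
    rw [uIcc_of_le h01.le]
    intro x hx
    have h' := hwpos x hx
    apply ContinuousAt.continuousWithinAt
    apply ContinuousAt.div continuousAt_const
    · have : Continuous (fun y => 2 * w y * Real.sqrt (w y)) := by
        simp only [hwdef]
        exact (continuous_const.mul (by continuity)).mul
          (Real.continuous_sqrt.comp (by continuity))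
      exact this.continuousAt
    · have : 0 < 2 * w x * Real.sqrt (w x) := by positivity
      exact ne_of_gt this
  have hψint : IntervalIntegrable ψ volume φ₀ φ₁ := hψcont.intervalIntegrable
  have hψFTC : (∫ x in φ₀..φ₁, ψ x)
      = Real.sqrt δ / 2 - (δ/2)/Real.sqrt (2*(φ₁-φ₀)+δ) := by
    have hderiv : ∀ x ∈ uIcc φ₀ φ₁,
        HasDerivAt (fun y => (δ/2) * (Real.sqrt (w y))⁻¹) (ψ x) x := by
      intro x hx
      rw [uIcc_of_le h01.le] at hx
      have hwx : 0 < w x := hwpos x hx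
      have hswx : 0 < Real.sqrt (w x) := Real.sqrt_pos.mpr hwx
      have hw : HasDerivAt w (-2) x := by
        have he : w = fun y => (-2)*y + (2*φ₁ + δ) := by
          funext y; simp only [hwdef]; ring
        rw [he]
        simpa using ((hasDerivAt_id x).const_mul (-2:ℝ)).add_const (2*φ₁ + δ)
      have hsq := (Real.hasDerivAt_sqrt (ne_of_gt hwx)).comp x hw
      have hinv := hsq.inv (ne_of_gt hswx)
      have hfin := hinv.const_mul (δ/2)
      refine hfin.congr_deriv (Eq.symm ?_)
      simp only [hψdef, Function.comp]
      have hsq2 : Real.sqrt (w x) ^ 2 = w x := Real.sq_sqrt hwx.le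
      rw [show -(1 / (2 * Real.sqrt (w x)) * -2) = 1/Real.sqrt (w x) from by
        field_simp]
      rw [hsq2]
      field_simp
    rw [integral_eq_sub_of_hasDerivAt hderiv hψint]
    have hw1 : w φ₁ = δ := by simp [hwdef]
    have hw0 : w φ₀ = 2*(φ₁-φ₀) + δ := rfl
    rw [hw1, hw0]
    have hδne : Real.sqrt δ ≠ 0 := ne_of_gt (Real.sqrt_pos.mpr hδ0)
    have hms : Real.sqrt δ * Real.sqrt δ = δ := Real.mul_self_sqrt hδ0.le
    have e1 : (δ/2) * (Real.sqrt δ)⁻¹ = Real.sqrt δ / 2 := by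
      field_simp
      linarith [hms]
    rw [e1, ← div_eq_mul_inv]
  have hGsub := intG' h0 h01 h2
  have hnn : 0 ≤ ∫ x in φ₀..φ₁,
      (G φ₁ x - ((fun y => 1 / Real.sqrt (a - Real.sin y ^ 2)) x + ψ x)) := by
    apply integral_nonneg_of_ae_restrict h01.le
    filter_upwards [ae_restrict_mem measurableSet_Icc,
      ae_restrict_of_ae (ae_ne_pt φ₁)] with x hx hne
    have hx1 : x < φ₁ := lt_of_le_of_ne hx.2 hne
    have hu0 : 0 < b - Real.sin x ^ 2 :=
      sub_pos.mpr (sq_lt h2.le (by linarith [hx.1, h0]) hx1)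
    have hwx : (b - Real.sin x ^ 2) + δ ≤ w x := by
      have hub := ubG h1 h2 (by linarith [hx.1, h0] : (0:ℝ) ≤ x) hx.2
      simp only [hwdef]
      linarith
    have hdef := deficit hu0 hδ0 hwx
    have hfa : a - Real.sin x ^ 2 = (b - Real.sin x ^ 2) + δ := by
      simp only [hδdef]; ring
    have hGx : G φ₁ x = 1 / Real.sqrt (b - Real.sin x ^ 2) := rfl
    simp only [Pi.zero_apply, Pi.sub_apply, Pi.add_apply]
    rw [hGx, hfa]
    have hψx : ψ x = δ / (2 * w x * Real.sqrt (w x)) := rfl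
    rw [hψx]
    linarith
  rw [integral_sub hGsub (hfaint.add hψint), integral_add hfaint hψint, hψFTC] at hnn
  have hmono : (δ/2)/Real.sqrt (2*(φ₁-φ₀)+δ) ≤ (δ/2)/Real.sqrt (2*(φ₁-φ₀)) := by
    have hp : 0 < Real.sqrt (2*(φ₁-φ₀)) := Real.sqrt_pos.mpr (by linarith)
    have hle : Real.sqrt (2*(φ₁-φ₀)) ≤ Real.sqrt (2*(φ₁-φ₀)+δ) :=
      Real.sqrt_le_sqrt (by linarith)
    exact div_le_div_of_nonneg_left (by positivity) hp hle
  linarith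


lemma arith3 {P s c : ℝ} (hP : 0 < P) (hs : 0 < s) (hc : 0 < c)
    (h : s * P ≤ c/4) : s^2 * P < s * c / 2 := by nlinarith

lemma part1 (h0 : 0 < φ₀) (h01 : φ₀ < φ₁) (h2 : φ₁ < π / 2) :
    Tendsto (timeMapTClTilde φ₀ φ₁) (nhdsWithin 1 (Iio 1)) atTop := by
  have hπ := Real.pi_pos
  have hev : ∀ᶠ a in nhdsWithin (1:ℝ) (Iio 1),
      Real.log (π/2) - Real.log (Real.sqrt (1-a)) ≤ timeMapTClTilde φ₀ φ₁ a := by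
    filter_upwards [Ioo_mem_nhdsLT_of_mem
      (⟨by norm_num, le_refl (1:ℝ)⟩ : (1:ℝ) ∈ Ioc (1/2 : ℝ) 1)] with a ha
    have hK := lower_bound_K ha.1 ha.2
    have hI : 0 ≤ ∫ x in φ₀..φ₁, 1 / Real.sqrt (a - Real.sin x ^ 2) :=
      integral_nonneg h01.le (fun x _ => by positivity)
    have hmul := mul_le_mul_of_nonneg_left hK (Real.sqrt_nonneg 2)
    rw [← mul_assoc, mul_one_div, div_self (by positivity : Real.sqrt 2 ≠ 0),
      one_mul] at hmul
    have h2' : 0 ≤ (1/Real.sqrt 2) *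
        ∫ x in φ₀..φ₁, 1 / Real.sqrt (a - Real.sin x ^ 2) :=
      mul_nonneg (by positivity) hI
    unfold timeMapTClTilde
    linarith
  have hlim : Tendsto (fun a : ℝ => Real.log (π/2) - Real.log (Real.sqrt (1-a)))
      (nhdsWithin 1 (Iio 1)) atTop := by
    have h1a : Tendsto (fun a : ℝ => Real.sqrt (1 - a)) (nhdsWithin 1 (Iio 1))
        (nhdsWithin 0 (Ioi 0)) := by
      apply tendsto_nhdsWithin_of_tendsto_nhds_of_eventually_within
      · have hcont : Continuous (fun a : ℝ => Real.sqrt (1 - a)) :=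
          Real.continuous_sqrt.comp (continuous_const.sub continuous_id)
        have := hcont.tendsto 1
        simp only [sub_self, Real.sqrt_zero] at this
        exact this.mono_left nhdsWithin_le_nhds
      · filter_upwards [self_mem_nhdsWithin] with a ha
        have h1a' : (0:ℝ) < 1 - a := by
          simp only [mem_Iio] at ha; linarith
        exact mem_Ioi.mpr (Real.sqrt_pos.mpr h1a')
    have hlog := Real.tendsto_log_nhdsGT_zero.comp h1a
    have hneg : Tendsto (fun a : ℝ => -Real.log (Real.sqrt (1-a)))
        (nhdsWithin 1 (Iio 1)) atTop := by
      rw [tendsto_neg_atTop_iff]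
      exact hlog
    have := tendsto_atTop_add_const_left (nhdsWithin (1:ℝ) (Iio 1))
      (Real.log (π/2)) hneg
    simpa [sub_eq_add_neg] using this
  exact tendsto_atTop_mono' _ hev hlim

lemma part2 (h0 : 0 < φ₀) (h01 : φ₀ < φ₁) (h2 : φ₁ < π / 2) :
    Tendsto (timeMapTClTilde φ₀ φ₁)
      (nhdsWithin (Real.sin φ₁ ^ 2) (Ioi (Real.sin φ₁ ^ 2)))
      (nhds (3 * timeMapT φ₁ - timeMapT1 φ₁ φ₀)) := by
  have h1 : 0 < φ₁ := h0.trans h01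
  have hK := tendstoK h1 h2
  have hI := tendstoI h0 h01 h2
  have hsum := (hK.const_mul (Real.sqrt 2)).add (hI.const_mul (1/Real.sqrt 2))
  have hval : Real.sqrt 2 * (∫ θ in (0:ℝ)..(π/2), H φ₁ θ)
      + (1 / Real.sqrt 2) * (∫ x in φ₀..φ₁, G φ₁ x)
      = 3 * timeMapT φ₁ - timeMapT1 φ₁ φ₀ := by
    rw [timeMapT, timeMapT1]
    exact value_eq h0 h01 h2
  rw [← hval]
  exact hsum

lemma part3 (h0 : 0 < φ₀) (h01 : φ₀ < φ₁) (h2 : φ₁ < π / 2) :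
    ∃ ε > 0, ∀ a ∈ Ioo (Real.sin φ₁ ^ 2) (Real.sin φ₁ ^ 2 + ε),
      timeMapTClTilde φ₀ φ₁ a < 3 * timeMapT φ₁ - timeMapT1 φ₁ φ₀ := by
  have hπ := Real.pi_pos
  have h1 : 0 < φ₁ := h0.trans h01
  have hb1 : Real.sin φ₁ ^ 2 < 1 := b_lt_one h1 h2
  have hb0 : 0 < Real.sin φ₁ ^ 2 := pow_pos (sin_pos' h1 h2) 2
  have hm0 : 0 < (1 - Real.sin φ₁ ^ 2)/2 := by linarith
  have hA0 : 0 < Real.sqrt ((1 - Real.sin φ₁ ^ 2)/2) := Real.sqrt_pos.mpr hm0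
  have hη0 : 0 < 2*(φ₁ - φ₀) := by linarith
  have hsη : 0 < Real.sqrt (2*(φ₁ - φ₀)) := Real.sqrt_pos.mpr hη0
  -- constants
  set P : ℝ := Real.sqrt 2 * (π/2) * (1 / (2 * Real.sqrt ((1 - Real.sin φ₁ ^ 2)/2) ^ 3))
      + (1/Real.sqrt 2) * (1 / (2 * Real.sqrt (2*(φ₁ - φ₀)))) with hPdef
  have hP0 : 0 < P := by
    rw [hPdef]; positivity
  set c : ℝ := 1/Real.sqrt 2 with hcdef
  have hc0 : 0 < c := by rw [hcdef]; positivity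
  refine ⟨min ((1 - Real.sin φ₁ ^ 2)/2) ((c/(4*P))^2), lt_min hm0 (by positivity), ?_⟩
  intro a ha
  obtain ⟨ha1, ha2⟩ := ha
  have hδ0 : 0 < a - Real.sin φ₁ ^ 2 := by linarith
  have hδ1 : a - Real.sin φ₁ ^ 2 < (1 - Real.sin φ₁ ^ 2)/2 := by
    have := min_le_left ((1 - Real.sin φ₁ ^ 2)/2) ((c/(4*P))^2)
    linarith
  have hδ2 : a - Real.sin φ₁ ^ 2 ≤ (c/(4*P))^2 := by
    have := min_le_right ((1 - Real.sin φ₁ ^ 2)/2) ((c/(4*P))^2)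
    linarith
  have hKle := Kle h1 h2 ha1 hδ1
  have hIle := Ile h0 h01 h2 ha1
  have hsqle : Real.sqrt (a - Real.sin φ₁ ^ 2) ≤ c/(4*P) := by
    have := Real.sqrt_le_sqrt hδ2
    rwa [Real.sqrt_sq (by positivity)] at this
  have hsP : Real.sqrt (a - Real.sin φ₁ ^ 2) * P ≤ c/4 := by
    have hmul := mul_le_mul_of_nonneg_right hsqle hP0.le
    have he : (c/(4*P)) * P = c/4 := by field_simp
    rwa [he] at hmul
  have hspos : 0 < Real.sqrt (a - Real.sin φ₁ ^ 2) := Real.sqrt_pos.mpr hδ0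
  have harith := arith3 hP0 hspos hc0 hsP
  rw [Real.sq_sqrt hδ0.le] at harith
  -- harith : (a - sin φ₁ ^ 2) * P < √(a - sin φ₁^2) * c
  have hstep := add_le_add
    (mul_le_mul_of_nonneg_left hKle (Real.sqrt_nonneg 2))
    (mul_le_mul_of_nonneg_left hIle (by positivity : (0:ℝ) ≤ 1/Real.sqrt 2))
  have hval : Real.sqrt 2 * (∫ θ in (0:ℝ)..(π/2), H φ₁ θ)
      + (1 / Real.sqrt 2) * (∫ x in φ₀..φ₁, G φ₁ x)
      = 3 * timeMapT φ₁ - timeMapT1 φ₁ φ₀ := by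
    rw [timeMapT, timeMapT1]
    exact value_eq h0 h01 h2
  have hexp : Real.sqrt 2 * ((∫ θ in (0:ℝ)..(π/2), H φ₁ θ)
        + (π/2) * ((a - Real.sin φ₁ ^ 2)
            / (2 * Real.sqrt ((1 - Real.sin φ₁ ^ 2)/2) ^ 3)))
      + (1/Real.sqrt 2) * ((∫ x in φ₀..φ₁, G φ₁ x)
        - (Real.sqrt (a - Real.sin φ₁ ^ 2) / 2
            - ((a - Real.sin φ₁ ^ 2)/2) / Real.sqrt (2*(φ₁ - φ₀))))
      = (Real.sqrt 2 * (∫ θ in (0:ℝ)..(π/2), H φ₁ θ)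
          + (1 / Real.sqrt 2) * (∫ x in φ₀..φ₁, G φ₁ x))
        + ((a - Real.sin φ₁ ^ 2) * P
            - Real.sqrt (a - Real.sin φ₁ ^ 2) * c / 2) := by
    rw [hPdef, hcdef]
    ring
  show Real.sqrt 2 * (∫ θ in (0:ℝ)..(π / 2), 1 / Real.sqrt (1 - a * Real.sin θ ^ 2)) +
      (1 / Real.sqrt 2) * (∫ x in φ₀..φ₁, 1 / Real.sqrt (a - Real.sin x ^ 2))
      < 3 * timeMapT φ₁ - timeMapT1 φ₁ φ₀
  rw [← hval]
  calc Real.sqrt 2 * (∫ θ in (0:ℝ)..(π / 2), 1 / Real.sqrt (1 - a * Real.sin θ ^ 2)) +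
      (1 / Real.sqrt 2) * (∫ x in φ₀..φ₁, 1 / Real.sqrt (a - Real.sin x ^ 2))
      ≤ (Real.sqrt 2 * (∫ θ in (0:ℝ)..(π/2), H φ₁ θ)
          + (1 / Real.sqrt 2) * (∫ x in φ₀..φ₁, G φ₁ x))
        + ((a - Real.sin φ₁ ^ 2) * P
            - Real.sqrt (a - Real.sin φ₁ ^ 2) * c / 2) := by
        rw [← hexp]; exact hstep
    _ < Real.sqrt 2 * (∫ θ in (0:ℝ)..(π/2), H φ₁ θ)
          + (1 / Real.sqrt 2) * (∫ x in φ₀..φ₁, G φ₁ x) := by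
        linarith

end TMaux

/-- For `0 < φ₀ < φ₁ < π/2`: `T̃_{C_ℓ}(ã) → +∞` as `ã → 1⁻`;
`T̃_{C_ℓ}(ã) → T^* = 3T(φ₁) − T₁(φ₁, φ₀)` as `ã → (sin²φ₁)⁺`; and there is
`ε > 0` with `T̃_{C_ℓ}(ã) < T^*` for all `ã ∈ (sin²φ₁, sin²φ₁ + ε)`. -/
theorem timeMapTClTilde_limits (φ₀ φ₁ : ℝ) (h₀ : 0 < φ₀) (h₀₁ : φ₀ < φ₁)
    (h₁ : φ₁ < π / 2) :
    Tendsto (timeMapTClTilde φ₀ φ₁) (nhdsWithin 1 (Set.Iio 1)) atTop ∧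
    Tendsto (timeMapTClTilde φ₀ φ₁)
      (nhdsWithin (Real.sin φ₁ ^ 2) (Set.Ioi (Real.sin φ₁ ^ 2)))
      (nhds (3 * timeMapT φ₁ - timeMapT1 φ₁ φ₀)) ∧
    ∃ ε > 0, ∀ a ∈ Set.Ioo (Real.sin φ₁ ^ 2) (Real.sin φ₁ ^ 2 + ε),
      timeMapTClTilde φ₀ φ₁ a < 3 * timeMapT φ₁ - timeMapT1 φ₁ φ₀ :=
  ⟨TMaux.part1 h₀ h₀₁ h₁, TMaux.part2 h₀ h₀₁ h₁, TMaux.part3 h₀ h₀₁ h₁⟩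
end

section
/- For all φ₀, φ₁ with 0 < φ₀ < φ₁ < π/2, every natural number k, and every α ∈ (φ₁, π/2), one has (4k+2)T(α) + T₁(α, φ₀) − T₁(α, φ₁) > (4k+1)T(φ₁) + T₁(φ₁, φ₀) and 4(k+1)T(α) − T₁(α, φ₀) − T₁(α, φ₁) > (4k+3)T(φ₁) − T₁(φ₁, φ₀); that is, the times of the k-winding orbits of types C_r and D exceed the critical times T_{*k}(φ₁) and T_k^*(φ₁), respectively. -/
open Real

/-- Subhomogeneity of sine: for `c ≥ 1`, `s ≥ 0`, `c*s ≤ π`, `sin (c*s) ≤ c * sin s`. -/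
lemma sin_mul_le {c s : ℝ} (hc : 1 ≤ c) (hs : 0 ≤ s) (hcs : c * s ≤ π) :
    Real.sin (c * s) ≤ c * Real.sin s := by
  have hc0 : 0 < c := lt_of_lt_of_le one_pos hc
  have hmem1 : c * s ∈ Set.Icc (0:ℝ) π := ⟨mul_nonneg hc0.le hs, hcs⟩
  have hmem2 : (0:ℝ) ∈ Set.Icc (0:ℝ) π := ⟨le_refl _, Real.pi_pos.le⟩
  have h := strictConcaveOn_sin_Icc.concaveOn.2 hmem1 hmem2
    (show (0:ℝ) ≤ 1/c by positivity)
    (show (0:ℝ) ≤ 1 - 1/c by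
      rw [sub_nonneg]
      exact div_le_one_of_le₀ hc hc0.le)
    (show 1/c + (1 - 1/c) = 1 by ring)
  simp only [smul_eq_mul, Real.sin_zero, mul_zero, add_zero] at h
  have hx : 1/c * (c * s) = s := by field_simp
  rw [hx] at h
  calc Real.sin (c * s) = c * (1/c * Real.sin (c * s)) := by field_simp
    _ ≤ c * Real.sin s := by
        exact mul_le_mul_of_nonneg_left h hc0.le

/-- Product formula for the denominator. -/
lemma cos_diff_eq (x β : ℝ) :
    Real.cos (2 * x) - Real.cos (2 * β) = 2 * Real.sin (x + β) * Real.sin (β - x) := by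
  rw [Real.cos_sub_cos]
  have h1 : (2 * x + 2 * β) / 2 = x + β := by ring
  have h2 : (2 * x - 2 * β) / 2 = -(β - x) := by ring
  rw [h1, h2, Real.sin_neg]
  ring

/-- Positivity of the denominator. -/
lemma denom_pos {x β : ℝ} (hx : 0 ≤ x) (hxβ : x < β) (hβ : β ≤ π / 2) :
    0 < Real.cos (2 * x) - Real.cos (2 * β) := by
  have := Real.cos_lt_cos_of_nonneg_of_le_pi (x := 2 * x) (y := 2 * β)
    (by linarith) (by linarith) (by linarith)
  linarith

/-- Integrability of the time-map integrand. -/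
lemma integrand_integrable {α : ℝ} (h0 : 0 < α) (h2 : α < π / 2) :
    IntervalIntegrable (fun x => 1 / Real.sqrt (Real.cos (2 * x) - Real.cos (2 * α)))
      MeasureTheory.volume 0 α := by
  have hπ := Real.pi_pos
  have hsα : 0 < Real.sin α := Real.sin_pos_of_pos_of_lt_pi h0 (by linarith)
  have hcα : 0 < Real.cos α := Real.cos_pos_of_mem_Ioo ⟨by linarith, h2⟩
  set c : ℝ := 4 / π * (Real.sin α * Real.cos α) with hc_def
  have hc : 0 < c := by positivity
  -- the dominating function
  have hgint : IntervalIntegrable (fun x => (1 / Real.sqrt c) * (α - x) ^ (-(1/2) : ℝ))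
      MeasureTheory.volume 0 α := by
    have h1 : IntervalIntegrable (fun x : ℝ => x ^ (-(1/2) : ℝ)) MeasureTheory.volume 0 α :=
      intervalIntegral.intervalIntegrable_rpow' (by norm_num)
    have h2' := (h1.comp_sub_left α).symm
    simpa using h2'.const_mul (1 / Real.sqrt c)
  apply hgint.mono_fun'
  · apply Measurable.aestronglyMeasurable
    apply Measurable.div measurable_const
    exact (Real.continuous_sqrt.comp
      ((Real.continuous_cos.comp (continuous_const.mul continuous_id)).sub
        continuous_const)).measurable
  · rw [Set.uIoc_of_le h0.le]
    refine (MeasureTheory.ae_restrict_iff' measurableSet_Ioc).mpr ?_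
    filter_upwards with x hx
    have hx0 : 0 < x := hx.1
    have hxα : x ≤ α := hx.2
    -- key lower bound on the denominator
    have hkey : c * (α - x) ≤ Real.cos (2 * x) - Real.cos (2 * α) := by
      rw [cos_diff_eq]
      have hs1 : Real.sin α * Real.cos α ≤ Real.sin (x + α) := by
        rw [Real.sin_add]
        have h3 : Real.cos α ≤ Real.cos x :=
          Real.cos_le_cos_of_nonneg_of_le_pi hx0.le (by linarith) hxα
        have h4 : 0 ≤ Real.sin x := Real.sin_nonneg_of_nonneg_of_le_pi hx0.le (by linarith)
        nlinarith
      have hs2 : 2 / π * (α - x) ≤ Real.sin (α - x) :=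
        Real.mul_le_sin (by linarith) (by linarith)
      have h5 : 0 ≤ 2 / π * (α - x) := by
        have : 0 ≤ α - x := by linarith
        positivity
      calc c * (α - x) = 2 * (Real.sin α * Real.cos α) * (2 / π * (α - x)) := by
            rw [hc_def]; field_simp; ring
        _ ≤ 2 * Real.sin (x + α) * Real.sin (α - x) := by
            have : 0 ≤ Real.sin α * Real.cos α := by positivity
            nlinarith
    rcases eq_or_lt_of_le hxα with heq | hlt
    · subst heq
      simp only [sub_self, Real.sqrt_zero, div_zero, norm_zero]
      rw [Real.zero_rpow (by norm_num)]
      positivity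
    · have hD : 0 < Real.cos (2 * x) - Real.cos (2 * α) := denom_pos hx0.le hlt h2.le
      have hax : 0 < α - x := by linarith
      have hca : 0 < c * (α - x) := by positivity
      rw [Real.norm_of_nonneg (by positivity)]
      have h6 : Real.sqrt (c * (α - x)) ≤ Real.sqrt (Real.cos (2 * x) - Real.cos (2 * α)) :=
        Real.sqrt_le_sqrt hkey
      have h7 : 1 / Real.sqrt (Real.cos (2 * x) - Real.cos (2 * α))
          ≤ 1 / Real.sqrt (c * (α - x)) :=
        one_div_le_one_div_of_le (Real.sqrt_pos.mpr hca) h6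
      have h8 : 1 / Real.sqrt (c * (α - x)) = 1 / Real.sqrt c * (α - x) ^ (-(1/2) : ℝ) := by
        rw [Real.sqrt_mul hc.le, Real.rpow_neg hax.le, ← Real.sqrt_eq_rpow,
          one_div, one_div, mul_inv]
      linarith [h7, h8.symm.le]

/-- Monotonicity of the quarter-period. -/
lemma timeMapT_mono {β α : ℝ} (hβ : 0 < β) (hβα : β ≤ α) (hα : α < π / 2) :
    timeMapT β ≤ timeMapT α := by
  have hπ := Real.pi_pos
  have h0α : 0 < α := lt_of_lt_of_le hβ hβα
  set c : ℝ := α / β with hc_def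
  have hc1 : 1 ≤ c := (one_le_div hβ).mpr hβα
  have hc0 : 0 < c := lt_of_lt_of_le one_pos hc1
  have hcβ : c * β = α := by rw [hc_def]; field_simp
  have hrw : timeMapT α
      = ∫ t in (0:ℝ)..β, c * (1 / Real.sqrt (Real.cos (2 * (c * t)) - Real.cos (2 * α))) := by
    rw [intervalIntegral.integral_const_mul]
    rw [intervalIntegral.integral_comp_mul_left
      (fun x => 1 / Real.sqrt (Real.cos (2 * x) - Real.cos (2 * α))) (ne_of_gt hc0)]
    rw [mul_zero, hcβ, timeMapT, smul_eq_mul]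
    field_simp
  rw [hrw, timeMapT]
  have hint1 : IntervalIntegrable
      (fun x => 1 / Real.sqrt (Real.cos (2 * x) - Real.cos (2 * β)))
      MeasureTheory.volume 0 β := integrand_integrable hβ (lt_of_le_of_lt hβα hα)
  have hint2 : IntervalIntegrable
      (fun t => c * (1 / Real.sqrt (Real.cos (2 * (c * t)) - Real.cos (2 * α))))
      MeasureTheory.volume 0 β := by
    have h := ((integrand_integrable h0α hα).comp_mul_left (c := c)).const_mul c
    have h0 : (0:ℝ) / c = 0 := by simp
    have hβ' : α / c = β := by field_simp [hc_def]; exact hcβ.symm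
    rw [h0, hβ'] at h
    exact h
  apply intervalIntegral.integral_mono_on hβ.le hint1 hint2
  intro t ht
  obtain ⟨ht0, htβ⟩ := ht
  have hA0 : 0 ≤ Real.cos (2 * t) - Real.cos (2 * β) := by
    have := Real.cos_le_cos_of_nonneg_of_le_pi (x := 2 * t) (y := 2 * β)
      (by linarith) (by linarith) (by linarith)
    linarith
  -- key inequality B ≤ c² A
  have hBA : Real.cos (2 * (c * t)) - Real.cos (2 * α)
      ≤ c ^ 2 * (Real.cos (2 * t) - Real.cos (2 * β)) := by
    have e1 : 2 * (c * t) = 2 * (c * t) := rfl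
    rw [cos_diff_eq t β]
    have hct : Real.cos (2 * (c * t)) - Real.cos (2 * α)
        = 2 * Real.sin (c * (t + β)) * Real.sin (c * (β - t)) := by
      have := cos_diff_eq (c * t) α
      rw [this, ← hcβ]
      ring_nf
    rw [hct]
    have hs1 : Real.sin (c * (t + β)) ≤ c * Real.sin (t + β) :=
      sin_mul_le hc1 (by linarith) (by
        rw [mul_add, hcβ]
        have := mul_le_mul_of_nonneg_left htβ hc0.le
        linarith)
    have hs2 : Real.sin (c * (β - t)) ≤ c * Real.sin (β - t) :=
      sin_mul_le hc1 (by linarith) (by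
        have : c * (β - t) ≤ c * β := by nlinarith
        linarith)
    have hn1 : 0 ≤ Real.sin (c * (t + β)) := by
      apply Real.sin_nonneg_of_nonneg_of_le_pi
      · positivity
      · rw [mul_add, hcβ]; nlinarith [mul_le_mul_of_nonneg_left htβ hc0.le]
    have hn2 : 0 ≤ Real.sin (c * (β - t)) := by
      apply Real.sin_nonneg_of_nonneg_of_le_pi
      · exact mul_nonneg hc0.le (by linarith)
      · have : c * (β - t) ≤ c * β := by nlinarith
        linarith
    nlinarith [mul_le_mul hs1 hs2 hn2 (mul_nonneg hc0.le
      (Real.sin_nonneg_of_nonneg_of_le_pi (by linarith) (by linarith)))]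
  rcases eq_or_lt_of_le htβ with heq | hlt
  · subst heq
    have h1 : Real.cos (2 * t) - Real.cos (2 * t) = 0 := by ring
    have h2 : Real.cos (2 * (c * t)) - Real.cos (2 * α) = 0 := by
      rw [hcβ]; ring
    rw [h1, h2]
    simp
  · have hA : 0 < Real.cos (2 * t) - Real.cos (2 * β) :=
      denom_pos ht0 hlt (by linarith)
    have hB : 0 < Real.cos (2 * (c * t)) - Real.cos (2 * α) := by
      apply denom_pos (by positivity) _ (by linarith)
      rw [← hcβ]
      exact (mul_lt_mul_iff_right₀ hc0).mpr hlt
    rw [mul_one_div, div_le_div_iff₀ (Real.sqrt_pos.mpr hA) (Real.sqrt_pos.mpr hB), one_mul]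
    calc Real.sqrt (Real.cos (2 * (c * t)) - Real.cos (2 * α))
        ≤ Real.sqrt (c ^ 2 * (Real.cos (2 * t) - Real.cos (2 * β))) := Real.sqrt_le_sqrt hBA
      _ = c * Real.sqrt (Real.cos (2 * t) - Real.cos (2 * β)) := by
          rw [Real.sqrt_mul (by positivity), Real.sqrt_sq hc0.le]

/-- For `0 < φ₀ < φ₁ < π/2`, `k ∈ ℕ` and `α ∈ (φ₁, π/2)`, the times of the
`k`-winding orbits of types `C_r` and `D` exceed the critical times
`T_{*k}(φ₁) = (4k+1)T(φ₁) + T₁(φ₁, φ₀)` and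
`T_k^*(φ₁) = (4k+3)T(φ₁) − T₁(φ₁, φ₀)`, respectively. -/
theorem winding_orbit_times_exceed_critical (φ₀ φ₁ : ℝ) (h₀ : 0 < φ₀)
    (h₀₁ : φ₀ < φ₁) (h₁ : φ₁ < π / 2) (k : ℕ) (α : ℝ)
    (hα : α ∈ Set.Ioo φ₁ (π / 2)) :
    (4 * (k : ℝ) + 2) * timeMapT α + timeMapT1 α φ₀ - timeMapT1 α φ₁ >
      (4 * (k : ℝ) + 1) * timeMapT φ₁ + timeMapT1 φ₁ φ₀ ∧
    4 * ((k : ℝ) + 1) * timeMapT α - timeMapT1 α φ₀ - timeMapT1 α φ₁ >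
      (4 * (k : ℝ) + 3) * timeMapT φ₁ - timeMapT1 φ₁ φ₀ := by
  obtain ⟨hφ₁α, hαπ⟩ := hα
  have h0α : 0 < α := lt_trans (lt_trans h₀ h₀₁) hφ₁α
  set fα : ℝ → ℝ := fun x => 1 / Real.sqrt (Real.cos (2 * x) - Real.cos (2 * α)) with hfα
  set fφ : ℝ → ℝ := fun x => 1 / Real.sqrt (Real.cos (2 * x) - Real.cos (2 * φ₁)) with hfφ
  -- integrability
  have hIα : IntervalIntegrable fα MeasureTheory.volume 0 α := integrand_integrable h0α hαπ
  have hIφ : IntervalIntegrable fφ MeasureTheory.volume 0 φ₁ :=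
    integrand_integrable (lt_trans h₀ h₀₁) h₁
  have hsub1 : Set.uIcc (0:ℝ) φ₀ ⊆ Set.uIcc (0:ℝ) α := by
    rw [Set.uIcc_of_le h₀.le, Set.uIcc_of_le h0α.le]
    exact Set.Icc_subset_Icc le_rfl (by linarith)
  have hsub2 : Set.uIcc (0:ℝ) φ₁ ⊆ Set.uIcc (0:ℝ) α := by
    rw [Set.uIcc_of_le (by linarith : (0:ℝ) ≤ φ₁), Set.uIcc_of_le h0α.le]
    exact Set.Icc_subset_Icc le_rfl (by linarith)
  have hsub3 : Set.uIcc φ₀ φ₁ ⊆ Set.uIcc (0:ℝ) α := by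
    rw [Set.uIcc_of_le h₀₁.le, Set.uIcc_of_le h0α.le]
    exact Set.Icc_subset_Icc h₀.le (by linarith)
  have hsub4 : Set.uIcc φ₁ α ⊆ Set.uIcc (0:ℝ) α := by
    rw [Set.uIcc_of_le hφ₁α.le, Set.uIcc_of_le h0α.le]
    exact Set.Icc_subset_Icc (by linarith) le_rfl
  have hsub5 : Set.uIcc (0:ℝ) φ₀ ⊆ Set.uIcc (0:ℝ) φ₁ := by
    rw [Set.uIcc_of_le h₀.le, Set.uIcc_of_le (by linarith : (0:ℝ) ≤ φ₁)]
    exact Set.Icc_subset_Icc le_rfl h₀₁.le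
  have hsub6 : Set.uIcc φ₀ φ₁ ⊆ Set.uIcc (0:ℝ) φ₁ := by
    rw [Set.uIcc_of_le h₀₁.le, Set.uIcc_of_le (by linarith : (0:ℝ) ≤ φ₁)]
    exact Set.Icc_subset_Icc h₀.le le_rfl
  have hIα0 := hIα.mono_set hsub1
  have hIα1 := hIα.mono_set hsub2
  have hIα01 := hIα.mono_set hsub3
  have hIα1α := hIα.mono_set hsub4
  have hIφ0 := hIφ.mono_set hsub5
  have hIφ01 := hIφ.mono_set hsub6
  -- pointwise comparison fα ≤ fφ for x < φ₁
  have hle : ∀ x : ℝ, 0 ≤ x → x < φ₁ → fα x ≤ fφ x := by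
    intro x hx0 hxφ
    have hA : 0 < Real.cos (2 * x) - Real.cos (2 * φ₁) := denom_pos hx0 hxφ h₁.le
    have hcc : Real.cos (2 * α) < Real.cos (2 * φ₁) :=
      Real.cos_lt_cos_of_nonneg_of_le_pi (by linarith [(lt_trans h₀ h₀₁)])
        (by linarith [Real.pi_pos]) (by linarith)
    apply one_div_le_one_div_of_le (Real.sqrt_pos.mpr hA)
    apply Real.sqrt_le_sqrt
    linarith
  have hlt : ∀ x : ℝ, 0 ≤ x → x < φ₁ → fα x < fφ x := by
    intro x hx0 hxφ
    have hA : 0 < Real.cos (2 * x) - Real.cos (2 * φ₁) := denom_pos hx0 hxφ h₁.le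
    have hcc : Real.cos (2 * α) < Real.cos (2 * φ₁) :=
      Real.cos_lt_cos_of_nonneg_of_le_pi (by linarith [(lt_trans h₀ h₀₁)])
        (by linarith [Real.pi_pos]) (by linarith)
    apply one_div_lt_one_div_of_lt (Real.sqrt_pos.mpr hA)
    have : Real.cos (2 * x) - Real.cos (2 * φ₁) < Real.cos (2 * x) - Real.cos (2 * α) := by
      linarith
    exact (Real.sqrt_lt_sqrt hA.le this)
  -- key quantities
  have hsplitφ : (∫ x in (0:ℝ)..φ₀, fφ x) + (∫ x in φ₀..φ₁, fφ x) = timeMapT φ₁ :=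
    intervalIntegral.integral_add_adjacent_intervals hIφ0 hIφ01
  have hsplitα : (∫ x in (0:ℝ)..φ₀, fα x) + (∫ x in φ₀..φ₁, fα x) = timeMapT1 α φ₁ :=
    intervalIntegral.integral_add_adjacent_intervals hIα0 hIα01
  have hsplitα2 : timeMapT1 α φ₁ + (∫ x in φ₁..α, fα x) = timeMapT α :=
    intervalIntegral.integral_add_adjacent_intervals hIα1 hIα1α
  -- positivity facts
  have hIpos : 0 < ∫ x in φ₁..α, fα x := by
    apply intervalIntegral.intervalIntegral_pos_of_pos_on hIα1α _ hφ₁α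
    intro x hx
    have := denom_pos (le_trans (by linarith : (0:ℝ) ≤ φ₁) hx.1.le) hx.2 hαπ.le
    positivity
  have hXY : (∫ x in φ₀..φ₁, fα x) < ∫ x in φ₀..φ₁, fφ x := by
    have hpos : 0 < ∫ x in φ₀..φ₁, (fφ x - fα x) := by
      apply intervalIntegral.intervalIntegral_pos_of_pos_on (hIφ01.sub hIα01) _ h₀₁
      intro x hx
      have := hlt x (le_trans h₀.le hx.1.le) hx.2
      linarith
    have := intervalIntegral.integral_sub hIφ01 hIα01
    rw [this] at hpos
    linarith
  have hpr : timeMapT1 α φ₀ ≤ timeMapT1 φ₁ φ₀ := by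
    apply intervalIntegral.integral_mono_on h₀.le hIα0 hIφ0
    intro x hx
    exact hle x hx.1 (lt_of_le_of_lt hx.2 h₀₁)
  have hT : timeMapT φ₁ ≤ timeMapT α :=
    timeMapT_mono (lt_trans h₀ h₀₁) hφ₁α.le hαπ
  have hk0 : (0:ℝ) ≤ (k : ℝ) := Nat.cast_nonneg k
  have hkT : (k:ℝ) * timeMapT φ₁ ≤ (k:ℝ) * timeMapT α :=
    mul_le_mul_of_nonneg_left hT hk0
  have e1 : timeMapT1 α φ₀ = ∫ x in (0:ℝ)..φ₀, fα x := rfl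
  have e2 : timeMapT1 φ₁ φ₀ = ∫ x in (0:ℝ)..φ₀, fφ x := rfl
  constructor
  · linarith [hsplitφ, hsplitα, hXY, hT, hkT, e1, e2]
  · linarith [hsplitα2, hIpos, hpr, hT, hkT]
end
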